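/- Let (γ,ν): I → ℝ² × S¹ be a Legendre curve with γ(t)=(x(t),z(t)), ν(t)=(cos φ(t), sin φ(t)) and curvature (φ̇,β), and let J(t) = −β(t)x(t), K(t) = −φ̇(t)cos φ(t). Suppose α: I → ℝ is a function with K(t) = α(t)J(t) for all t. Then x satisfies the second order linear ODE β(t)ẍ(t) − β̇(t)ẋ(t) + α(t)β(t)³x(t) = 0 on I; moreover (d/dt)(sin φ(t)) = α(t)β(t)x(t), so sin φ(t) = sin φ(t₀) + ∫_{t₀}^{t} α(s)β(s)x(s) ds, cos φ(t)² = 1 − (sin φ(t))², and z(t) = z(t₀) + ∫_{t₀}^{t} β(s)cos φ(s) ds. -/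

import Mathlib

open Real

/-- Let `(γ, ν)` be a Legendre curve with `γ = (x, z)`,
`ν = (cos φ, sin φ)` and curvature `(φ̇, β)` (so `ẋ = -β sin φ`, `ż = β cos φ`), and let
`J = -βx`, `K = -φ̇ cos φ`.  If `α : I → ℝ` satisfies `K = αJ`, then `x` solves
`βẍ - β̇ẋ + αβ³x = 0`; moreover `(sin φ)' = αβx`, so
`sin φ(t) = sin φ(t₀) + ∫_{t₀}^{t} αβx`, `cos²φ = 1 - sin²φ`, and
`z(t) = z(t₀) + ∫_{t₀}^{t} β cos φ`. -/
theorem profile_curve_from_Gauss_curvature_ratio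
    (x z φ β α : ℝ → ℝ)
    (hx : ContDiff ℝ (⊤ : ℕ∞) x) (hz : ContDiff ℝ (⊤ : ℕ∞) z)
    (hφ : ContDiff ℝ (⊤ : ℕ∞) φ) (hβ : ContDiff ℝ (⊤ : ℕ∞) β)
    (hdx : ∀ t, deriv x t = -(β t) * sin (φ t))
    (hdz : ∀ t, deriv z t = β t * cos (φ t))
    -- K = α J,  where K = -φ̇ cos φ and J = -βx
    (hKJ : ∀ t, -(deriv φ t) * cos (φ t) = α t * (-(β t) * x t)) :
    (∀ t : ℝ,
      β t * deriv (deriv x) t - deriv β t * deriv x t + α t * β t ^ 3 * x t = 0) ∧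
    (∀ t : ℝ, deriv (fun s => sin (φ s)) t = α t * β t * x t) ∧
    (∀ t₀ t : ℝ, sin (φ t) = sin (φ t₀) + ∫ s in t₀..t, α s * β s * x s) ∧
    (∀ t : ℝ, cos (φ t) ^ 2 = 1 - sin (φ t) ^ 2) ∧
    (∀ t₀ t : ℝ, z t = z t₀ + ∫ s in t₀..t, β s * cos (φ s)) := by
  have hφd : Differentiable ℝ φ := hφ.differentiable (by simp)
  have hβd : Differentiable ℝ β := hβ.differentiable (by simp)
  have hxd : Differentiable ℝ x := hx.differentiable (by simp)
  have hzd : Differentiable ℝ z := hz.differentiable (by simp)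
  have hKJ' : ∀ t, deriv φ t * cos (φ t) = α t * β t * x t := by
    intro t; have := hKJ t; nlinarith [this]
  -- deriv of sin ∘ φ
  have hsin : ∀ t, HasDerivAt (fun s => sin (φ s)) (cos (φ t) * deriv φ t) t := by
    intro t
    exact (Real.hasDerivAt_sin (φ t)).comp t (hφd t).hasDerivAt
  have hsin' : ∀ t, deriv (fun s => sin (φ s)) t = α t * β t * x t := by
    intro t
    rw [(hsin t).deriv, mul_comm, hKJ' t]
  -- continuity of integrand
  have habx : (fun s => α s * β s * x s) = fun s => deriv φ s * cos (φ s) := by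
    funext s; rw [hKJ' s]
  have hφ'cont : Continuous (deriv φ) := (hφ.iterate_deriv 1).continuous
  have hcont1 : Continuous fun s => α s * β s * x s := by
    rw [habx]; exact hφ'cont.mul (Real.continuous_cos.comp hφ.continuous)
  constructor
  · intro t
    -- x' = -β sin φ as function equality
    have hdx' : deriv x = fun s => -(β s) * sin (φ s) := funext hdx
    have hx2 : HasDerivAt (deriv x)
        (-(deriv β t) * sin (φ t) + -(β t) * (cos (φ t) * deriv φ t)) t := by
      rw [hdx']
      exact ((hβd t).hasDerivAt.neg.mul (hsin t))
    have := hx2.deriv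
    rw [this, hdx t]
    linear_combination (-(β t ^ 2)) * hKJ' t
  refine ⟨hsin', ?_, ?_, ?_⟩
  · intro t₀ t
    have := intervalIntegral.integral_deriv_eq_sub (f := fun s => sin (φ s))
      (a := t₀) (b := t) (fun s _ => ((hsin s).differentiableAt))
      (by rw [funext hsin']; exact hcont1.intervalIntegrable _ _)
    rw [funext hsin'] at this
    rw [this]; ring
  · intro t; nlinarith [sin_sq_add_cos_sq (φ t)]
  · intro t₀ t
    have hcont2 : Continuous fun s => β s * cos (φ s) :=
      hβ.continuous.mul (Real.continuous_cos.comp hφ.continuous)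
    have := intervalIntegral.integral_deriv_eq_sub (f := z)
      (a := t₀) (b := t) (fun s _ => hzd s)
      (by rw [funext hdz]; exact hcont2.intervalIntegrable _ _)
    rw [funext hdz] at this
    rw [this]; ring
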